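/- For all positive real numbers a, b, A, B, the following inequality holds: (1 + a/A)^A · (1 + b/B)^B ≤ (1 + (a+b)/(A+B))^{A+B}. -/

import Mathlib

/-- For all positive reals `a, b, A, B` one has
`(1 + a/A)^A · (1 + b/B)^B ≤ (1 + (a+b)/(A+B))^(A+B)`, with real exponents. -/
theorem rpow_mean_inequality (a b A B : ℝ) (ha : 0 < a) (hb : 0 < b) (hA : 0 < A)
    (hB : 0 < B) :
    (1 + a / A) ^ A * (1 + b / B) ^ B ≤ (1 + (a + b) / (A + B)) ^ (A + B) := by
  set S := A + B with hS
  have hSpos : 0 < S := by positivity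
  have hp1 : (0:ℝ) ≤ 1 + a / A := by positivity
  have hp2 : (0:ℝ) ≤ 1 + b / B := by positivity
  have hw1 : (0:ℝ) ≤ A / S := by positivity
  have hw2 : (0:ℝ) ≤ B / S := by positivity
  have hwsum : A / S + B / S = 1 := by field_simp; exact hS.symm
  have hgm := Real.geom_mean_le_arith_mean2_weighted hw1 hw2 hp1 hp2 hwsum
  have hrhs : A / S * (1 + a / A) + B / S * (1 + b / B) = 1 + (a + b) / S := by
    field_simp
    ring
  rw [hrhs] at hgm
  have := Real.rpow_le_rpow (by positivity) hgm (le_of_lt hSpos)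
  rwa [Real.mul_rpow (by positivity) (by positivity),
    ← Real.rpow_mul hp1, ← Real.rpow_mul hp2,
    div_mul_cancel₀ _ hSpos.ne', div_mul_cancel₀ _ hSpos.ne'] at this
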